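/- arXiv:1911.11494 — 3 statements merged into one kernel-verified Lean document; each statement's English description precedes it below -/
import Mathlib

section
/- Let S = (V, E⁺ ∪ E⁻) be a finite complete signed graph with a valid distance drawing D in a metric space (T,d), and define r_v = d(D(v),D(v⁺))/2 as above. Then for all distinct u,v ∈ V with {u,v} ∈ E⁻, one has d(D(u),D(v)) > r_u + r_v; in particular the closed balls B(D(u),r_u) and B(D(v),r_v) are disjoint. -/
/-- `D` is a valid distance drawing of the complete signed graph whose
positive subgraph is `P` (negative edges are the non-adjacent distinct pairs). -/
def ValidDrawing {V T : Type*} [MetricSpace T] (P : SimpleGraph V) (D : V → T) : Prop :=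
  Function.Injective D ∧
    ∀ u v w : V, P.Adj u v → u ≠ w → ¬ P.Adj u w →
      dist (D u) (D v) < dist (D u) (D w)

/-- `p v` is a farthest positive neighbor of `v` in `N⁺[v]` under `D`. -/
def FarthestFriend {V T : Type*} [MetricSpace T] (P : SimpleGraph V) (D : V → T)
    (p : V → V) : Prop :=
  ∀ v : V, (p v = v ∨ P.Adj v (p v)) ∧
    ∀ w : V, (w = v ∨ P.Adj v w) → dist (D v) (D w) ≤ dist (D v) (D (p v))

theorem stmt_5 {V T : Type*} [Fintype V] [MetricSpace T]
    (P : SimpleGraph V) (D : V → T) (p : V → V)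
    (hD : ValidDrawing P D) (hp : FarthestFriend P D p) :
    ∀ u v : V, u ≠ v → ¬ P.Adj u v →
      dist (D u) (D v) > dist (D u) (D (p u)) / 2 + dist (D v) (D (p v)) / 2 ∧
      Metric.closedBall (D u) (dist (D u) (D (p u)) / 2) ∩
        Metric.closedBall (D v) (dist (D v) (D (p v)) / 2) = ∅ := by
  obtain ⟨hinj, hval⟩ := hD
  intro u v huv hneg
  have hpos : 0 < dist (D u) (D v) := by
    rw [dist_pos]; exact fun h => huv (hinj h)
  have hu : dist (D u) (D (p u)) < dist (D u) (D v) := by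
    rcases (hp u).1 with h | h
    · rw [h]; simpa using hpos
    · exact hval u (p u) v h huv hneg
  have hv : dist (D v) (D (p v)) < dist (D u) (D v) := by
    rcases (hp v).1 with h | h
    · rw [h]; simpa using hpos
    · have := hval v (p v) u h (Ne.symm huv) (fun h' => hneg (h'.symm))
      rwa [dist_comm (D v) (D u)] at this
  have hmain : dist (D u) (D v) > dist (D u) (D (p u)) / 2 + dist (D v) (D (p v)) / 2 := by
    linarith
  refine ⟨hmain, ?_⟩
  ext x
  simp only [Set.mem_inter_iff, Metric.mem_closedBall, Set.mem_empty_iff_false, iff_false]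
  rintro ⟨h1, h2⟩
  have := dist_triangle (D u) x (D v)
  rw [dist_comm x (D u)] at h1
  linarith [dist_comm x (D v) ▸ h2]
end

section
/- A finite complete signed graph S has a valid distance drawing in a geodesic metric space (T,d) in which its positive subgraph S⁺ admits a unit-ball intersection model if and only if S⁺ admits a family of closed balls in some metric space whose pairwise intersection pattern equals the edge relation of S⁺. Concretely: if there exist points c_v ∈ T (injective in v) with {u,v} ∈ E⁺ ⟺ d(c_u,c_v) ≤ 2 for distinct u,v, then D(v) = c_v is a valid distance drawing of S; conversely, if D is a valid distance drawing of S in a metric space (T,d), then with r_v = d(D(v),D(v⁺))/2, for all distinct u,v: {u,v} ∈ E⁺ ⟺ d(D(u),D(v)) ≤ r_u + r_v. -/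
/-- A metric space is geodesic if any two points `x, y` are joined by an
isometric embedding of the interval `[0, dist x y]`. -/
def IsGeodesicSpace (X : Type*) [MetricSpace X] : Prop :=
  ∀ x y : X, ∃ γ : ℝ → X, γ 0 = x ∧ γ (dist x y) = y ∧
    ∀ s ∈ Set.Icc (0 : ℝ) (dist x y), ∀ t ∈ Set.Icc (0 : ℝ) (dist x y),
      dist (γ s) (γ t) = |s - t|

theorem stmt_9 {V : Type*} [Fintype V] (P : SimpleGraph V) :
    (∀ (T : Type) (_ : MetricSpace T), IsGeodesicSpace T →
      ∀ c : V → T, Function.Injective c →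
        (∀ u v : V, u ≠ v → (P.Adj u v ↔ dist (c u) (c v) ≤ 2)) →
        ValidDrawing P c) ∧
    (∀ (T : Type) (_ : MetricSpace T) (D : V → T) (p : V → V),
      ValidDrawing P D → FarthestFriend P D p →
      ∀ u v : V, u ≠ v →
        (P.Adj u v ↔
          dist (D u) (D v) ≤ dist (D u) (D (p u)) / 2 + dist (D v) (D (p v)) / 2)) := by
  constructor
  · intro T _ _ c hinj hadj
    refine ⟨hinj, fun u v w huv huw hnadj => ?_⟩
    have h1 : dist (c u) (c v) ≤ 2 := (hadj u v huv.ne).mp huv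
    have h2 : ¬ dist (c u) (c w) ≤ 2 := fun h => hnadj ((hadj u w huw).mpr h)
    linarith [not_le.mp h2]
  · intro T _ D p hD hF u v huv
    obtain ⟨hinj, hdraw⟩ := hD
    constructor
    · intro hadj
      have h1 : dist (D u) (D v) ≤ dist (D u) (D (p u)) :=
        (hF u).2 v (Or.inr hadj)
      have h2 : dist (D v) (D u) ≤ dist (D v) (D (p v)) :=
        (hF v).2 u (Or.inr hadj.symm)
      rw [dist_comm (D v) (D u)] at h2
      linarith
    · intro hle
      by_contra hnadj
      have hu : 2 * (dist (D u) (D (p u)) / 2) < dist (D u) (D v) := by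
        rcases (hF u).1 with h | h
        · rw [h, dist_self]
          simpa [dist_pos] using hinj.ne huv
        · have := hdraw u (p u) v h huv hnadj
          linarith
      have hv : 2 * (dist (D v) (D (p v)) / 2) < dist (D v) (D u) := by
        rcases (hF v).1 with h | h
        · rw [h, dist_self]
          simpa [dist_pos] using hinj.ne huv.symm
        · have := hdraw v (p v) u h huv.symm (fun hh => hnadj hh.symm)
          linarith
      rw [dist_comm (D v) (D u)] at hv
      linarith
end

section
/- Let T be a finite tree with the shortest-path metric and suppose a finite graph G is the intersection graph of integer-radius balls {B(c_v, r_v)}_{v ∈ V} in T. Then G is also the intersection graph of a family of equal-radius balls in a (possibly larger) tree: there exists a tree T' containing T as an isometrically embedded subgraph, centers c'_v in T', and a common radius R, such that for distinct u,v: B(c'_u, R) ∩ B(c'_v, R) ≠ ∅ in T' if and only if B(c_u, r_u) ∩ B(c_v, r_v) ≠ ∅ in T. -/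
open SimpleGraph

private lemma walk_inv {α : Type*} {G : SimpleGraph α} {P : α → Prop}
    (h : ∀ ⦃x y⦄, G.Adj x y → (P x ↔ P y)) {a b : α} (p : G.Walk a b) : P a ↔ P b := by
  induction p with
  | nil => rfl
  | cons hadj _ ih => exact (h hadj).trans ih

private lemma lip_walk {α : Type*} {G : SimpleGraph α} {f : α → ℤ}
    (h : ∀ ⦃x y⦄, G.Adj x y → |f x - f y| ≤ 1) {a b : α} (p : G.Walk a b) :
    |f a - f b| ≤ p.length := by
  induction p with
  | nil => simp
  | @cons x y z hadj q ih =>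
    calc |f x - f z| ≤ |f x - f y| + |f y - f z| := abs_sub_le _ _ _
    _ ≤ 1 + q.length := add_le_add (h hadj) ih
    _ ≤ _ := by rw [Walk.length_cons]; push_cast; omega

private lemma lip_dist {α : Type*} {G : SimpleGraph α} {f : α → ℤ}
    (h : ∀ ⦃x y⦄, G.Adj x y → |f x - f y| ≤ 1) {a b : α} (hr : G.Reachable a b) :
    |f a - f b| ≤ G.dist a b := by
  obtain ⟨p, hp⟩ := hr.exists_walk_length_eq_dist
  simpa [hp] using lip_walk h p

private lemma geo {α : Type*} {G : SimpleGraph α} (hc : G.Connected) {a b : α} (p : G.Walk a b)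
    (k : ℕ) (hk : k ≤ p.length) : ∃ x, G.dist a x ≤ k ∧ G.dist x b ≤ p.length - k := by
  induction p generalizing k with
  | nil => rename_i u; exact ⟨u, by simp [SimpleGraph.dist_self], by simp [SimpleGraph.dist_self]⟩
  | @cons x y z hadj q ih =>
    cases k with
    | zero =>
      refine ⟨x, by simp, ?_⟩
      simpa using G.dist_le (Walk.cons hadj q)
    | succ k =>
      obtain ⟨w, h1, h2⟩ := ih k (by simpa using Nat.succ_le_succ_iff.mp hk)
      refine ⟨w, ?_, ?_⟩
      · calc G.dist x w ≤ G.dist x y + G.dist y w := hc.dist_triangle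
        _ ≤ 1 + k := by
            have : G.dist x y ≤ 1 := by simpa using G.dist_le hadj.toWalk
            omega
        _ = k + 1 := by omega
      · rw [Walk.length_cons]; omega

/-- The closed ball of radius `r` around `c` in the shortest-path metric of a graph `T`. -/
def graphBall {W : Type*} (T : SimpleGraph W) (c : W) (r : ℕ) : Set W :=
  {w : W | T.dist c w ≤ r}

theorem stmt_11 {W V : Type*} [Fintype W] [Fintype V]
    (T : SimpleGraph W) (hT : T.IsTree) (c : V → W) (r : V → ℕ) :
    ∃ (W' : Type) (_ : Fintype W') (T' : SimpleGraph W') (φ : W → W')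
      (c' : V → W') (R : ℕ),
      T'.IsTree ∧ Function.Injective φ ∧
      (∀ a b : W, T'.dist (φ a) (φ b) = T.dist a b) ∧
      ∀ u v : V, u ≠ v →
        ((graphBall T' (c' u) R ∩ graphBall T' (c' v) R).Nonempty ↔
          (graphBall T (c u) (r u) ∩ graphBall T (c v) (r v)).Nonempty) := by
  classical
  have hconn : T.Connected := hT.isConnected
  have hNE : Nonempty W := hconn.nonempty
  set m := Fintype.card W with hm
  set e : W ≃ Fin m := Fintype.equivFin W with he
  set R := Finset.univ.sup r with hRdef
  have hrR : ∀ v, r v ≤ R := fun v => Finset.le_sup (Finset.mem_univ v)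
  set T' : SimpleGraph (Fin m × Fin (R+1)) :=
    { Adj := fun x y => ((x.2 : ℕ) = 0 ∧ (y.2 : ℕ) = 0 ∧ T.Adj (e.symm x.1) (e.symm y.1)) ∨
        (x.1 = y.1 ∧ ((x.2 : ℕ) + 1 = (y.2 : ℕ) ∨ (y.2 : ℕ) + 1 = (x.2 : ℕ)))
      symm := by
        constructor
        rintro x y (⟨h1, h2, h3⟩ | ⟨h1, h2⟩)
        · exact Or.inl ⟨h2, h1, h3.symm⟩
        · exact Or.inr ⟨h1.symm, h2.symm⟩
      loopless := by
        constructor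
        rintro x (⟨_, _, h⟩ | ⟨_, h⟩)
        · exact T.loopless.irrefl _ h
        · omega } with hT'def
  have hadj : ∀ x y : Fin m × Fin (R+1), T'.Adj x y ↔
      (((x.2 : ℕ) = 0 ∧ (y.2 : ℕ) = 0 ∧ T.Adj (e.symm x.1) (e.symm y.1)) ∨
        (x.1 = y.1 ∧ ((x.2 : ℕ) + 1 = (y.2 : ℕ) ∨ (y.2 : ℕ) + 1 = (x.2 : ℕ)))) :=
    fun _ _ => Iff.rfl
  -- the embedding homomorphism
  set ψ : T →g T' := ⟨fun a => (e a, 0), by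
    intro a b hab
    exact Or.inl ⟨by simp, by simp, by simpa using hab⟩⟩ with hψdef
  have hψ : ∀ a : W, ψ a = (e a, (0 : Fin (R+1))) := fun _ => rfl
  -- walks down a tooth
  have htooth : ∀ (i : Fin m) (k : ℕ) (hk : k ≤ R),
      ∃ p : T'.Walk (i, ⟨k, by omega⟩) (i, (0 : Fin (R+1))), p.length = k := by
    intro i k
    induction k with
    | zero =>
      intro _
      have h0 : ((⟨0, by omega⟩ : Fin (R+1))) = (0 : Fin (R+1)) := by ext; simp
      exact ⟨Walk.nil.copy (by rw [h0]) rfl, by simp⟩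
    | succ k ih =>
      intro hk
      obtain ⟨p, hp⟩ := ih (by omega)
      have ha : T'.Adj (i, ⟨k+1, by omega⟩) (i, ⟨k, by omega⟩) := Or.inr ⟨rfl, Or.inr rfl⟩
      exact ⟨Walk.cons ha p, by simp [hp]⟩
  -- connectivity of T'
  have hreach0 : ∀ x : Fin m × Fin (R+1), T'.Reachable x (x.1, (0 : Fin (R+1))) := by
    rintro ⟨x1, x2, hx2⟩
    obtain ⟨p, _⟩ := htooth x1 x2 (by omega)
    exact ⟨p⟩
  have hconn' : T'.Connected := by
    rw [connected_iff]
    refine ⟨?_, ⟨(e (Classical.arbitrary W), 0)⟩⟩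
    intro x y
    refine (hreach0 x).trans (Reachable.trans ?_ (hreach0 y).symm)
    have : T.Reachable (e.symm x.1) (e.symm y.1) := hconn.preconnected _ _
    have h2 := this.map ψ
    rw [hψ, hψ] at h2
    simpa using h2
  -- adjacent vertices in T are at distance ≤ 1
  have hadj1 : ∀ {a b : W}, T.Adj a b → T.dist a b ≤ 1 := by
    intro a b h
    simpa using T.dist_le h.toWalk
  -- the isometry property
  have hiso : ∀ a b : W, T'.dist (ψ a) (ψ b) = T.dist a b := by
    intro a b
    have hub : T'.dist (ψ a) (ψ b) ≤ T.dist a b := by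
      obtain ⟨p, hp⟩ := hconn.exists_walk_length_eq_dist a b
      have := T'.dist_le (p.map ψ)
      rwa [Walk.length_map, hp] at this
    have hlb : (T.dist a b : ℤ) ≤ T'.dist (ψ a) (ψ b) := by
      set f : Fin m × Fin (R+1) → ℤ := fun z => (T.dist a (e.symm z.1) : ℤ) with hfdef
      have hlip : ∀ ⦃x y⦄, T'.Adj x y → |f x - f y| ≤ 1 := by
        intro x y hxy
        rcases (hadj x y).mp hxy with ⟨_, _, h3⟩ | ⟨h1, _⟩
        · have d1 : T.dist a (e.symm x.1) ≤ T.dist a (e.symm y.1) + 1 := by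
            have := hconn.dist_triangle (u := a) (v := e.symm y.1) (w := e.symm x.1)
            have h4 := hadj1 h3.symm
            omega
          have d2 : T.dist a (e.symm y.1) ≤ T.dist a (e.symm x.1) + 1 := by
            have := hconn.dist_triangle (u := a) (v := e.symm x.1) (w := e.symm y.1)
            have h4 := hadj1 h3
            omega
          rw [abs_le]
          constructor <;> simp only [hfdef] <;> push_cast <;> omega
        · simp [hfdef, h1]
      have := lip_dist hlip ((hconn'.preconnected (ψ a) (ψ b)))
      have hfa : f (ψ a) = 0 := by simp [hfdef, hψ]
      have hfb : f (ψ b) = T.dist a b := by simp [hfdef, hψ]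
      rw [hfa, hfb] at this
      calc (T.dist a b : ℤ) = |0 - (T.dist a b : ℤ)| := by
            rw [zero_sub, abs_neg, Nat.abs_cast]
      _ ≤ T'.dist (ψ a) (ψ b) := this
    have : T.dist a b ≤ T'.dist (ψ a) (ψ b) := by exact_mod_cast hlb
    omega
  -- acyclicity via bridges
  have hacyc : T'.IsAcyclic := by
    rw [isAcyclic_iff_forall_adj_isBridge]
    have claim_tooth : ∀ (i : Fin m) (j j' : Fin (R+1)), (j : ℕ) + 1 = (j' : ℕ) →
        T'.IsBridge s((i,j),(i,j')) := by
      intro i j j' hjj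
      have hadjt : T'.Adj (i,j) (i,j') := Or.inr ⟨rfl, Or.inl hjj⟩
      rw [isBridge_iff]
      refine ?_
      rintro ⟨p⟩
      set P : Fin m × Fin (R+1) → Prop := fun z => z.1 = i ∧ (j : ℕ) < (z.2 : ℕ) with hPdef
      have hstep : ∀ ⦃a b⦄, (T' \ fromEdgeSet {s((i,j),(i,j'))}).Adj a b → (P a ↔ P b) := by
        intro a b hab
        rw [sdiff_adj] at hab
        obtain ⟨hab1, hab2⟩ := hab
        have hne : s(a,b) ≠ s((i,j),(i,j')) := by
          intro hc
          exact hab2 ((fromEdgeSet_adj _).mpr ⟨by simp [hc], hab1.ne⟩)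
        rcases (hadj a b).mp hab1 with ⟨g1, g2, _⟩ | ⟨g1, g2⟩
        · constructor
          · rintro ⟨_, hlt⟩; omega
          · rintro ⟨_, hlt⟩; omega
        · by_cases hai : a.1 = i
          · have hbi : b.1 = i := g1 ▸ hai
            have hne' : ¬(((a.2 : ℕ) = j ∧ (b.2 : ℕ) = j') ∨ ((a.2 : ℕ) = j' ∧ (b.2 : ℕ) = j)) := by
              rintro (⟨u1, u2⟩ | ⟨u1, u2⟩) <;> apply hne
              · rw [show a = (i, j) from Prod.ext hai (Fin.ext u1),
                  show b = (i, j') from Prod.ext hbi (Fin.ext u2)]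
              · rw [show a = (i, j') from Prod.ext hai (Fin.ext u1),
                  show b = (i, j) from Prod.ext hbi (Fin.ext u2), Sym2.eq_swap]
            simp only [hPdef, hai, hbi, true_and]
            omega
          · have hbi : ¬ b.1 = i := g1 ▸ hai
            simp [hPdef, hai, hbi]
      have hP := walk_inv hstep p
      have h2 : P (i, j') := ⟨rfl, show (j : ℕ) < (j' : ℕ) by omega⟩
      have h1 : (j : ℕ) < (j : ℕ) := (hP.mpr h2).2
      omega
    intro x y hxy
    rcases (hadj x y).mp hxy with ⟨h1, h2, h3⟩ | ⟨h1, h2⟩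
    · -- base edge
      rw [isBridge_iff]
      refine ?_
      rintro ⟨p⟩
      have hTb := (isAcyclic_iff_forall_adj_isBridge.mp hT.IsAcyclic) h3
      rw [isBridge_iff] at hTb
      apply hTb
      set G0 := T \ fromEdgeSet {s(e.symm x.1, e.symm y.1)} with hG0def
      set P : Fin m × Fin (R+1) → Prop := fun z => G0.Reachable (e.symm x.1) (e.symm z.1)
        with hPdef
      have hstep : ∀ ⦃a b⦄, (T' \ fromEdgeSet {s(x,y)}).Adj a b → (P a ↔ P b) := by
        intro a b hab
        rw [sdiff_adj] at hab
        obtain ⟨hab1, hab2⟩ := hab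
        have hne : s(a,b) ≠ s(x,y) := by
          intro hc
          exact hab2 ((fromEdgeSet_adj _).mpr ⟨by simp [hc], hab1.ne⟩)
        rcases (hadj a b).mp hab1 with ⟨g1, g2, g3⟩ | ⟨g1, g2⟩
        · have hadjG0 : G0.Adj (e.symm a.1) (e.symm b.1) := by
            rw [hG0def, sdiff_adj]
            refine ⟨g3, ?_⟩
            rw [fromEdgeSet_adj]
            rintro ⟨hmem, -⟩
            simp only [Set.mem_singleton_iff, Sym2.eq_iff] at hmem
            apply hne
            rcases hmem with ⟨u1, u2⟩ | ⟨u1, u2⟩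
            · rw [show a = x from Prod.ext (e.symm.injective u1) (Fin.ext (by omega)),
                show b = y from Prod.ext (e.symm.injective u2) (Fin.ext (by omega))]
            · rw [show a = y from Prod.ext (e.symm.injective u1) (Fin.ext (by omega)),
                show b = x from Prod.ext (e.symm.injective u2) (Fin.ext (by omega)),
                Sym2.eq_swap]
          exact ⟨fun h => h.trans ⟨hadjG0.toWalk⟩, fun h => h.trans ⟨hadjG0.symm.toWalk⟩⟩
        · simp [hPdef, g1]
      have hP := walk_inv hstep p
      exact hP.mp (Reachable.refl _)
    · -- tooth edge
      rcases h2 with h2 | h2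
      · have hb := claim_tooth x.1 x.2 y.2 h2
        have hxy' : s(x, y) = s((x.1, x.2), (x.1, y.2)) := by
          rw [show (x.1, x.2) = x from rfl, show (x.1, y.2) = y from Prod.ext h1 rfl]
        rwa [hxy']
      · have hb := claim_tooth y.1 y.2 x.2 h2
        have hxy' : s(x, y) = s((y.1, y.2), (y.1, x.2)) := by
          rw [Sym2.eq_swap, show (y.1, y.2) = y from rfl,
            show (y.1, x.2) = x from Prod.ext h1.symm rfl]
        rwa [hxy']
  have hT'tree : T'.IsTree := ⟨hconn', hacyc⟩
  set c' : V → Fin m × Fin (R+1) := fun v0 => (e (c v0), ⟨R - r v0, by omega⟩) with hc'def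
  have hc'1 : ∀ v0 : V, (c' v0).1 = e (c v0) := fun _ => rfl
  have hc'2 : ∀ v0 : V, ((c' v0).2 : ℕ) = R - r v0 := fun _ => rfl
  -- distance from the center to the base of its tooth
  have hup : ∀ w0 : V, T'.dist (c' w0) (ψ (c w0)) ≤ R - r w0 := by
    intro w0
    obtain ⟨p, hp⟩ := htooth (e (c w0)) (R - r w0) (by omega)
    have := T'.dist_le p
    rwa [hp] at this
  -- key upper bound via a Lipschitz potential
  have key : ∀ (w0 : V) (z : Fin m × Fin (R+1)), T'.dist (c' w0) z ≤ R →
      e.symm z.1 ≠ c w0 → T.dist (c w0) (e.symm z.1) ≤ r w0 := by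
    intro w0 z hle hne
    have hXnn : (0:ℤ) ≤ (R:ℤ) - r w0 := by have := hrR w0; push_cast; omega
    set D : Fin m × Fin (R+1) → ℤ := fun zz =>
      if e.symm zz.1 = c w0 then |((R:ℤ) - r w0) - ((zz.2 : ℕ) : ℤ)|
      else ((R:ℤ) - r w0) + (T.dist (c w0) (e.symm zz.1) : ℤ) + ((zz.2 : ℕ) : ℤ) with hDdef
    have hlip : ∀ ⦃x y⦄, T'.Adj x y → |D x - D y| ≤ 1 := by
      intro x y hxy
      rcases (hadj x y).mp hxy with ⟨g1, g2, g3⟩ | ⟨g1, g2⟩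
      · have hx2 : ((x.2 : ℕ) : ℤ) = 0 := by exact_mod_cast g1
        have hy2 : ((y.2 : ℕ) : ℤ) = 0 := by exact_mod_cast g2
        have hdd1 : T.dist (c w0) (e.symm x.1) ≤ T.dist (c w0) (e.symm y.1) + 1 := by
          have := hconn.dist_triangle (u := c w0) (v := e.symm y.1) (w := e.symm x.1)
          have h4 := hadj1 g3.symm
          omega
        have hdd2 : T.dist (c w0) (e.symm y.1) ≤ T.dist (c w0) (e.symm x.1) + 1 := by
          have := hconn.dist_triangle (u := c w0) (v := e.symm x.1) (w := e.symm y.1)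
          have h4 := hadj1 g3
          omega
        by_cases hx : e.symm x.1 = c w0 <;> by_cases hy : e.symm y.1 = c w0
        · exact absurd (hx.trans hy.symm) g3.ne
        · simp only [hDdef, if_pos hx, if_neg hy, hx2, hy2, sub_zero, add_zero,
            abs_of_nonneg hXnn]
          have hdist1 : T.dist (c w0) (e.symm y.1) ≤ 1 := by rw [← hx]; exact hadj1 g3
          rw [show (R:ℤ) - r w0 - ((R:ℤ) - r w0 + (T.dist (c w0) (e.symm y.1) : ℤ)) =
            -(T.dist (c w0) (e.symm y.1) : ℤ) by ring, abs_neg, Nat.abs_cast]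
          exact_mod_cast hdist1
        · simp only [hDdef, if_neg hx, if_pos hy, hx2, hy2, sub_zero, add_zero,
            abs_of_nonneg hXnn]
          have hdist1 : T.dist (c w0) (e.symm x.1) ≤ 1 := by rw [← hy]; exact hadj1 g3.symm
          rw [show (R:ℤ) - r w0 + (T.dist (c w0) (e.symm x.1) : ℤ) - ((R:ℤ) - r w0) =
            (T.dist (c w0) (e.symm x.1) : ℤ) by ring, Nat.abs_cast]
          exact_mod_cast hdist1
        · simp only [hDdef, if_neg hx, if_neg hy, hx2, hy2, add_zero]
          rw [show (R:ℤ) - r w0 + (T.dist (c w0) (e.symm x.1) : ℤ) -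
            ((R:ℤ) - r w0 + (T.dist (c w0) (e.symm y.1) : ℤ)) =
            (T.dist (c w0) (e.symm x.1) : ℤ) - (T.dist (c w0) (e.symm y.1) : ℤ) by ring, abs_le]
          push_cast
          omega
      · by_cases hx : e.symm x.1 = c w0
        · have hy : e.symm y.1 = c w0 := by rw [← g1]; exact hx
          simp only [hDdef, if_pos hx, if_pos hy]
          calc |(|((R:ℤ) - r w0) - ((x.2 : ℕ) : ℤ)| - |((R:ℤ) - r w0) - ((y.2 : ℕ) : ℤ)|)|
              ≤ |(((R:ℤ) - r w0) - ((x.2 : ℕ) : ℤ)) - (((R:ℤ) - r w0) - ((y.2 : ℕ) : ℤ))| :=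
                abs_abs_sub_abs_le_abs_sub _ _
            _ = |((y.2 : ℕ) : ℤ) - ((x.2 : ℕ) : ℤ)| := by ring_nf
            _ ≤ 1 := by rw [abs_le]; push_cast; omega
        · have hy : ¬ e.symm y.1 = c w0 := by rw [← g1]; exact hx
          simp only [hDdef, if_neg hx, if_neg hy, g1]
          rw [show (R:ℤ) - r w0 + (T.dist (c w0) (e.symm y.1) : ℤ) + ((x.2 : ℕ) : ℤ) -
            ((R:ℤ) - r w0 + (T.dist (c w0) (e.symm y.1) : ℤ) + ((y.2 : ℕ) : ℤ)) =
            ((x.2 : ℕ) : ℤ) - ((y.2 : ℕ) : ℤ) by ring, abs_le]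
          push_cast
          omega
    have hD0 : D (c' w0) = 0 := by
      have h1 : e.symm ((c' w0).1) = c w0 := by rw [hc'1]; simp
      rw [hDdef]
      simp only [if_pos h1, hc'2]
      rw [Nat.cast_sub (hrR w0), sub_self, abs_zero]
    have hbound := lip_dist hlip (hconn'.preconnected (c' w0) z)
    rw [hD0, zero_sub, abs_neg] at hbound
    have hDz : D z ≤ R := le_trans (le_trans (le_abs_self _) hbound) (by exact_mod_cast hle)
    rw [hDdef] at hDz
    simp only [if_neg hne] at hDz
    have hz2 : (0:ℤ) ≤ ((z.2 : ℕ) : ℤ) := by positivity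
    have := hrR w0
    -- (R - r w0) + d + z2 ≤ R  ⟹  d ≤ r w0
    have : (T.dist (c w0) (e.symm z.1) : ℤ) ≤ (r w0 : ℤ) := by omega
    exact_mod_cast this
  -- final assembly
  refine ⟨Fin m × Fin (R+1), inferInstance, T', fun a => ψ a, c', R, hT'tree, ?_, hiso, ?_⟩
  · intro a b hab
    have : e a = e b := congrArg Prod.fst hab
    exact e.injective this
  · intro u v huv
    have claimT : (graphBall T (c u) (r u) ∩ graphBall T (c v) (r v)).Nonempty ↔
        T.dist (c u) (c v) ≤ r u + r v := by
      constructor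
      · rintro ⟨x, hx1, hx2⟩
        have h1 : T.dist (c u) x ≤ r u := hx1
        have h2 : T.dist (c v) x ≤ r v := hx2
        have h3 := hconn.dist_triangle (u := c u) (v := x) (w := c v)
        have h4 : T.dist x (c v) = T.dist (c v) x := T.dist_comm
        omega
      · intro hd
        obtain ⟨p, hp⟩ := hconn.exists_walk_length_eq_dist (c u) (c v)
        obtain ⟨x, g1, g2⟩ := geo hconn p (min (r u) (T.dist (c u) (c v)))
          (by rw [hp]; omega)
        rw [hp] at g2
        have g3 : T.dist (c v) x = T.dist x (c v) := T.dist_comm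
        exact ⟨x, show T.dist (c u) x ≤ r u by omega, show T.dist (c v) x ≤ r v by omega⟩
    have claimT' : (graphBall T' (c' u) R ∩ graphBall T' (c' v) R).Nonempty ↔
        T.dist (c u) (c v) ≤ r u + r v := by
      constructor
      · rintro ⟨z, hz1, hz2⟩
        have hz1' : T'.dist (c' u) z ≤ R := hz1
        have hz2' : T'.dist (c' v) z ≤ R := hz2
        by_cases hzu : e.symm z.1 = c u <;> by_cases hzv : e.symm z.1 = c v
        · rw [← hzu, ← hzv, T.dist_self]; omega
        · have h1 := key v z hz2' hzv
          have h2 : T.dist (c u) (c v) = T.dist (c v) (e.symm z.1) := by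
            rw [← hzu, T.dist_comm]
          omega
        · have h1 := key u z hz1' hzu
          have h2 : T.dist (c u) (c v) = T.dist (c u) (e.symm z.1) := by rw [← hzv]
          omega
        · have h1 := key u z hz1' hzu
          have h2 := key v z hz2' hzv
          have h3 := hconn.dist_triangle (u := c u) (v := e.symm z.1) (w := c v)
          have h4 : T.dist (e.symm z.1) (c v) = T.dist (c v) (e.symm z.1) := T.dist_comm
          omega
      · intro hd
        obtain ⟨p, hp⟩ := hconn.exists_walk_length_eq_dist (c u) (c v)
        obtain ⟨x, g1, g2⟩ := geo hconn p (min (r u) (T.dist (c u) (c v)))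
          (by rw [hp]; omega)
        rw [hp] at g2
        refine ⟨ψ x, ?_, ?_⟩
        · show T'.dist (c' u) (ψ x) ≤ R
          have t1 := hconn'.dist_triangle (u := c' u) (v := ψ (c u)) (w := ψ x)
          have t2 := hup u
          have t3 : T'.dist (ψ (c u)) (ψ x) = T.dist (c u) x := hiso (c u) x
          have := hrR u
          omega
        · show T'.dist (c' v) (ψ x) ≤ R
          have t1 := hconn'.dist_triangle (u := c' v) (v := ψ (c v)) (w := ψ x)
          have t2 := hup v
          have t3 : T'.dist (ψ (c v)) (ψ x) = T.dist (c v) x := hiso (c v) x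
          have t4 : T.dist (c v) x = T.dist x (c v) := T.dist_comm
          have := hrR v
          omega
    rw [claimT', claimT]
end
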